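/- Let K and H be symmetric positive definite n×n real matrices, y ∈ ℝⁿ, and λ > 0. Define g(γ) = (y − Kγ)'H(y − Kγ) + λγ'Kγ for γ ∈ ℝⁿ. Then γ̂ = (K + λH⁻¹)⁻¹y is the unique minimizer of g: for every γ ∈ ℝⁿ, g(γ̂) ≤ g(γ), with equality if and only if γ = γ̂. That is, the Franklin estimate also minimizes the H-weighted residual with K-weighted penalty. -/

import Mathlib

open Matrix

private lemma swap_dot {n : ℕ} {B : Matrix (Fin n) (Fin n) ℝ} (hB : Bᵀ = B)
    (v w : Fin n → ℝ) : v ⬝ᵥ (B *ᵥ w) = w ⬝ᵥ (B *ᵥ v) := by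
  rw [dotProduct_mulVec, ← mulVec_transpose, hB, dotProduct_comm]

private lemma move_dot {n : ℕ} {B : Matrix (Fin n) (Fin n) ℝ} (hB : Bᵀ = B)
    (v w : Fin n → ℝ) : (B *ᵥ v) ⬝ᵥ w = v ⬝ᵥ (B *ᵥ w) := by
  rw [dotProduct_comm, swap_dot hB]


/-- the Franklin estimate `γ̂ = (K + λH⁻¹)⁻¹y` also uniquely minimizes
`g(γ) = (y − Kγ)'H(y − Kγ) + λγ'Kγ`. -/
theorem franklin_unique_minimizer_weighted {n : ℕ}
    (K H : Matrix (Fin n) (Fin n) ℝ) (hK : K.PosDef) (hH : H.PosDef)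
    (y : Fin n → ℝ) (lam : ℝ) (hlam : 0 < lam)
    (g : (Fin n → ℝ) → ℝ)
    (hg : ∀ c : Fin n → ℝ,
      g c = (y - K *ᵥ c) ⬝ᵥ (H *ᵥ (y - K *ᵥ c)) + lam * (c ⬝ᵥ (K *ᵥ c)))
    (gammaHat : Fin n → ℝ)
    (hgamma : gammaHat = (K + lam • H⁻¹)⁻¹ *ᵥ y) :
    ∀ c : Fin n → ℝ, g gammaHat ≤ g c ∧ (g gammaHat = g c ↔ c = gammaHat) := by
  have hKt : Kᵀ = K := hK.isHermitian
  have hHt : Hᵀ = H := hH.isHermitian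
  set M : Matrix (Fin n) (Fin n) ℝ := K * H * K + lam • K with hMdef
  have hMt : Mᵀ = M := by
    rw [hMdef, transpose_add, transpose_smul, hKt, transpose_mul, transpose_mul, hKt, hHt,
      ← mul_assoc]
  -- A = K + lam • H⁻¹ is positive definite, hence invertible
  have hsm : (lam • H⁻¹).PosDef := by
    refine Matrix.PosDef.of_dotProduct_mulVec_pos ?_ (fun x hx => ?_)
    · show (lam • H⁻¹)ᴴ = _
      rw [conjTranspose_smul, star_trivial, hH.inv.isHermitian.eq]
    · have := hH.inv.dotProduct_mulVec_pos hx
      simp only [smul_mulVec, dotProduct_smul, smul_eq_mul, star_trivial] at *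
      positivity
  have hA : (K + lam • H⁻¹).PosDef := hK.add hsm
  have hAinv : (K + lam • H⁻¹) * (K + lam • H⁻¹)⁻¹ = 1 :=
    mul_nonsing_inv _ (isUnit_iff_ne_zero.2 hA.det_pos.ne')
  have hHinv : H * H⁻¹ = 1 := mul_nonsing_inv _ (isUnit_iff_ne_zero.2 hH.det_pos.ne')
  -- key : M *ᵥ gammaHat = (K * H) *ᵥ y
  have hMA : M = (K * H) * (K + lam • H⁻¹) := by
    rw [hMdef, mul_add, Matrix.mul_smul, mul_assoc K H H⁻¹, hHinv, mul_one]
  have key : M *ᵥ gammaHat = (K * H) *ᵥ y := by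
    rw [hMA, hgamma, mulVec_mulVec, mul_assoc (K * H), hAinv, mul_one]
  -- M is positive definite
  have hM : M.PosDef := by
    refine Matrix.PosDef.of_dotProduct_mulVec_pos hMt (fun x hx => ?_)
    simp only [star_trivial, hMdef, add_mulVec, dotProduct_add, smul_mulVec,
      dotProduct_smul, smul_eq_mul]
    have h1 : 0 ≤ (K *ᵥ x) ⬝ᵥ (H *ᵥ (K *ᵥ x)) := by
      simpa using hH.posSemidef.dotProduct_mulVec_nonneg (K *ᵥ x)
    have h2 : 0 < x ⬝ᵥ (K *ᵥ x) := by simpa using hK.dotProduct_mulVec_pos hx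
    have h3 : (K *ᵥ x) ⬝ᵥ (H *ᵥ (K *ᵥ x)) = x ⬝ᵥ ((K * H * K) *ᵥ x) := by
      rw [move_dot hKt, mulVec_mulVec, mulVec_mulVec]
    rw [← h3]
    nlinarith
  -- canonical quadratic form of g
  have form : ∀ c, g c = y ⬝ᵥ (H *ᵥ y) - 2 * (c ⬝ᵥ (M *ᵥ gammaHat)) + c ⬝ᵥ (M *ᵥ c) := by
    intro c
    rw [hg, key]
    have e1 : y ⬝ᵥ (H *ᵥ (K *ᵥ c)) = c ⬝ᵥ ((K * H) *ᵥ y) := by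
      rw [swap_dot hHt, move_dot hKt, mulVec_mulVec]
    have e2 : (K *ᵥ c) ⬝ᵥ (H *ᵥ y) = c ⬝ᵥ ((K * H) *ᵥ y) := by
      rw [move_dot hKt, mulVec_mulVec]
    have e3 : (K *ᵥ c) ⬝ᵥ (H *ᵥ (K *ᵥ c)) = c ⬝ᵥ ((K * H * K) *ᵥ c) := by
      rw [move_dot hKt, mulVec_mulVec, mulVec_mulVec]
    have e4 : c ⬝ᵥ (M *ᵥ c) = c ⬝ᵥ ((K * H * K) *ᵥ c) + lam * (c ⬝ᵥ (K *ᵥ c)) := by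
      rw [hMdef, add_mulVec, dotProduct_add, smul_mulVec, dotProduct_smul, smul_eq_mul]
    simp only [dotProduct_sub, sub_dotProduct, mulVec_sub, e1, e2, e3]
    rw [e4]; ring
  have expand : ∀ c, g c = g gammaHat + (c - gammaHat) ⬝ᵥ (M *ᵥ (c - gammaHat)) := by
    intro c
    have h3 : (c - gammaHat) ⬝ᵥ (M *ᵥ (c - gammaHat)) =
        c ⬝ᵥ (M *ᵥ c) - c ⬝ᵥ (M *ᵥ gammaHat) - gammaHat ⬝ᵥ (M *ᵥ c)
          + gammaHat ⬝ᵥ (M *ᵥ gammaHat) := by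
      simp only [sub_dotProduct, dotProduct_sub, mulVec_sub]; ring
    have h4 : gammaHat ⬝ᵥ (M *ᵥ c) = c ⬝ᵥ (M *ᵥ gammaHat) := swap_dot hMt _ _
    rw [form c, form gammaHat, h3, h4]; ring
  intro c
  rcases eq_or_ne c gammaHat with h | h
  · subst h; simp
  have hd : c - gammaHat ≠ 0 := sub_ne_zero.2 h
  have hpos : 0 < (c - gammaHat) ⬝ᵥ (M *ᵥ (c - gammaHat)) := by simpa using hM.dotProduct_mulVec_pos hd
  have := expand c
  constructor
  · linarith
  · constructor
    · intro he; exfalso; linarith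
    · intro he; exact absurd he h
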